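/- arXiv:2110.09578 — 3 statements merged into one kernel-verified Lean document; each statement's English description precedes it below -/
import Mathlib

section
/- Let A be an affine region and let a, b ∈ ℝⁿ be such that: (1) a ∈ A and a + b ∈ A; (2) all nonzero components of a and of b have indices in a single tie class J of A; (3) for some index i₀ ∈ J, the components a_{i₀} and (a+b)_{i₀} have strictly opposite signs. Then there exists γ with 0 ≤ γ ≤ 1 such that a = −γ·b. -/
theorem stmt_5 (n k : ℕ) (v : Fin k → Fin n → ℝ) (c : Fin n → ℝ)
    (A : Set (Fin n → ℝ))
    (hA : A = {x | ∃ α : Fin k → ℝ, (∀ j, |α j| ≤ 1) ∧ x = (∑ j, α j • v j) + c})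
    (tied : Fin n → Fin n → Prop)
    (htied : ∀ i₁ i₂, tied i₁ i₂ ↔ ∀ x ∈ A,
      (x i₁ > 0 ∧ x i₂ > 0) ∨ (x i₁ < 0 ∧ x i₂ < 0) ∨ (x i₁ = 0 ∧ x i₂ = 0))
    (J : Set (Fin n)) (hJ : ∃ i, J = {i' | tied i i'})
    (a b : Fin n → ℝ) (ha : a ∈ A) (hab : a + b ∈ A)
    (hsa : ∀ i, a i ≠ 0 → i ∈ J) (hsb : ∀ i, b i ≠ 0 → i ∈ J)
    (i₀ : Fin n) (hi₀ : i₀ ∈ J)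
    (hsign : (a i₀ > 0 ∧ (a + b) i₀ < 0) ∨ (a i₀ < 0 ∧ (a + b) i₀ > 0)) :
    ∃ γ : ℝ, 0 ≤ γ ∧ γ ≤ 1 ∧ a = -(γ • b) := by
  obtain ⟨i, hJi⟩ := hJ
  simp only [Pi.add_apply] at hsign
  have hbne : b i₀ ≠ 0 := by
    rcases hsign with ⟨h1, h2⟩ | ⟨h1, h2⟩ <;> intro h <;> rw [h] at h2 <;> linarith
  set t : ℝ := -(a i₀) / b i₀ with ht
  have ht0 : 0 ≤ t ∧ t ≤ 1 := by
    rcases hsign with ⟨h1, h2⟩ | ⟨h1, h2⟩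
    · have hb : b i₀ < 0 := by linarith
      have : t = a i₀ / (-(b i₀)) := by rw [ht, neg_div, div_neg]
      rw [this]
      constructor
      · exact div_nonneg (le_of_lt h1) (by linarith)
      · rw [div_le_one (by linarith)]; linarith
    · have hb : 0 < b i₀ := by linarith
      constructor
      · exact div_nonneg (by linarith) (le_of_lt hb)
      · rw [div_le_one hb]; linarith
  have hzero : a i₀ + t * b i₀ = 0 := by
    rw [ht]; field_simp; ring
  -- membership of a + t • b
  obtain ⟨α₁, hα₁, hx₁⟩ := hA ▸ ha
  obtain ⟨α₂, hα₂, hx₂⟩ := hA ▸ hab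
  have hmem : a + t • b ∈ A := by
    rw [hA]
    refine ⟨fun j => (1 - t) * α₁ j + t * α₂ j, fun j => ?_, ?_⟩
    · calc |(1 - t) * α₁ j + t * α₂ j| ≤ |(1 - t) * α₁ j| + |t * α₂ j| := abs_add_le _ _
        _ = |1 - t| * |α₁ j| + |t| * |α₂ j| := by rw [abs_mul, abs_mul]
        _ = (1 - t) * |α₁ j| + t * |α₂ j| := by
            rw [abs_of_nonneg (by linarith [ht0.2]), abs_of_nonneg ht0.1]
        _ ≤ (1 - t) * 1 + t * 1 := by
            gcongr
            exacts [by linarith [ht0.2], hα₁ j, ht0.1, hα₂ j]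
        _ = 1 := by ring
    · have : a + t • b = (1 - t) • a + t • (a + b) := by
        funext i'; simp [Pi.add_apply]; ring
      rw [this, hx₂, hx₁]
      funext i'
      simp only [Pi.add_apply, Pi.smul_apply, Finset.sum_apply, smul_eq_mul,
        Finset.mul_sum]
      simp only [mul_add, Finset.mul_sum, add_mul, Finset.sum_add_distrib, mul_assoc]
      ring
  -- key: (a + t • b) i₀ = 0, so all components in J vanish
  have hx0 : (a + t • b) i₀ = 0 := by simpa using hzero
  have hkey : ∀ i' ∈ J, (a + t • b) i' = 0 := by
    have hti₀ : tied i i₀ := by rw [hJi] at hi₀; exact hi₀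
    have hi0 : (a + t • b) i = 0 := by
      rcases (htied i i₀).1 hti₀ _ hmem with ⟨h1, h2⟩ | ⟨h1, h2⟩ | ⟨h1, h2⟩
      · exact absurd hx0 (by linarith)
      · exact absurd hx0 (by linarith)
      · exact h1
    intro i' hi'
    have hti' : tied i i' := by rw [hJi] at hi'; exact hi'
    rcases (htied i i').1 hti' _ hmem with ⟨h1, h2⟩ | ⟨h1, h2⟩ | ⟨h1, h2⟩
    · exact absurd hi0 (by linarith)
    · exact absurd hi0 (by linarith)
    · exact h2
  refine ⟨t, ht0.1, ht0.2, ?_⟩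
  funext i'
  by_cases h : i' ∈ J
  · have := hkey i' h
    simp only [Pi.add_apply, Pi.smul_apply, smul_eq_mul] at this ⊢
    simp only [Pi.neg_apply, Pi.smul_apply, smul_eq_mul]
    linarith
  · have ha' : a i' = 0 := by by_contra hc; exact h (hsa i' hc)
    have hb' : b i' = 0 := by by_contra hc; exact h (hsb i' hc)
    simp [ha', hb']
end

section
/- Let x ∈ A with x = ∑ᵢ αᵢ vᵢ + c, |αᵢ| ≤ 1. For each tie class j of A, let v'^j_i be the vector obtained from vᵢ by zeroing all components outside tie class j, and similarly let c_j be c restricted to class j. Then there exist scalars α'^j_i ∈ {αᵢ, 0} and β_j ∈ {0,1} such that ReLU(x) = ∑_{i,j} α'^j_i v'^j_i + ∑_j β_j c_j; moreover the components of ReLU(x) with indices in tie class j are all zero iff all α'^j_i and β_j are zero. -/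
theorem stmt_7 (n k : ℕ) (v : Fin k → Fin n → ℝ) (c : Fin n → ℝ)
    (A : Set (Fin n → ℝ))
    (hA : A = {x | ∃ α : Fin k → ℝ, (∀ i, |α i| ≤ 1) ∧ x = (∑ i, α i • v i) + c})
    (tied : Fin n → Fin n → Prop)
    (htied : ∀ i₁ i₂, tied i₁ i₂ ↔ ∀ x ∈ A,
      (x i₁ > 0 ∧ x i₂ > 0) ∨ (x i₁ < 0 ∧ x i₂ < 0) ∨ (x i₁ = 0 ∧ x i₂ = 0))
    (classes : Finset (Set (Fin n)))
    (hclasses : ∀ S : Set (Fin n), S ∈ classes ↔ ∃ i : Fin n, S = {i' | tied i i'})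
    (α : Fin k → ℝ) (hα : ∀ i, |α i| ≤ 1)
    (x : Fin n → ℝ) (hx : x = (∑ i, α i • v i) + c) :
    ∃ (α' : Fin k → Set (Fin n) → ℝ) (β : Set (Fin n) → ℝ),
      (∀ i S, α' i S = α i ∨ α' i S = 0) ∧
      (∀ S, β S = 0 ∨ β S = 1) ∧
      (fun l => max (x l) 0) =
        (∑ S ∈ classes, ((∑ i, α' i S • S.indicator (v i)) + β S • S.indicator c)) ∧
      (∀ S ∈ classes,
        ((∀ l ∈ S, max (x l) 0 = 0) ↔ ((∀ i, α' i S = 0) ∧ β S = 0))) := by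
  classical
  have hxA : x ∈ A := by
    rw [hA]; exact ⟨α, hα, hx⟩
  -- tied is reflexive
  have hrefl : ∀ l, tied l l := by
    intro l
    rw [htied]
    intro y _
    rcases lt_trichotomy (y l) 0 with h | h | h
    · exact Or.inr (Or.inl ⟨h, h⟩)
    · exact Or.inr (Or.inr ⟨h, h⟩)
    · exact Or.inl ⟨h, h⟩
  -- tied i l and tied i z imply tied l z
  have htrans : ∀ i l z, tied i l → tied i z → tied l z := by
    intro i l z h1 h2
    rw [htied] at h1 h2 ⊢
    intro y hy
    rcases h1 y hy with ⟨a, b⟩ | ⟨a, b⟩ | ⟨a, b⟩ <;>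
      rcases h2 y hy with ⟨a', b'⟩ | ⟨a', b'⟩ | ⟨a', b'⟩ <;>
      first
        | exact Or.inl ⟨b, b'⟩
        | exact Or.inr (Or.inl ⟨b, b'⟩)
        | exact Or.inr (Or.inr ⟨b, b'⟩)
        | (exfalso; linarith)
  -- members of the same class have the same sign of x
  have hsign : ∀ S ∈ classes, ∀ l ∈ S, ∀ l' ∈ S, (0 < x l ↔ 0 < x l') := by
    intro S hS l hl l' hl'
    obtain ⟨i, rfl⟩ := (hclasses S).1 hS
    have h := htrans i l l' hl hl'
    rw [htied] at h
    rcases h x hxA with ⟨a, b⟩ | ⟨a, b⟩ | ⟨a, b⟩ <;> constructor <;> intro <;> linarith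
  set pos : Set (Fin n) → Prop := fun S => ∃ l ∈ S, 0 < x l with hpos
  refine ⟨fun i S => if pos S then α i else 0, fun S => if pos S then 1 else 0,
    fun i S => by by_cases h : pos S <;> simp [h], fun S => by by_cases h : pos S <;> simp [h],
    ?_, ?_⟩
  · funext l
    have hlS : l ∈ ({i' | tied l i'} : Set (Fin n)) := hrefl l
    have hS₀ : ({i' | tied l i'} : Set (Fin n)) ∈ classes := (hclasses _).2 ⟨l, rfl⟩
    rw [Finset.sum_apply]
    rw [Finset.sum_eq_single_of_mem ({i' | tied l i'} : Set (Fin n)) hS₀]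
    · have hposiff : pos {i' | tied l i'} ↔ 0 < x l := by
        constructor
        · rintro ⟨l', hl', hx'⟩
          exact (hsign _ hS₀ l hlS l' hl').2 hx'
        · intro h; exact ⟨l, hlS, h⟩
      by_cases h : pos ({i' | tied l i'} : Set (Fin n))
      · have hxl : 0 < x l := hposiff.1 h
        simp only [h, if_true, Pi.add_apply, Finset.sum_apply, Pi.smul_apply,
          Set.indicator_of_mem hlS, smul_eq_mul, one_mul]
        have : x l = (∑ i, α i * v i l) + c l := by
          rw [hx]; simp [Finset.sum_apply]
        rw [max_eq_left hxl.le, this]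
      · have hxl : ¬ 0 < x l := fun hh => h (hposiff.2 hh)
        simp only [h, if_false, Pi.add_apply, Finset.sum_apply, Pi.smul_apply,
          smul_eq_mul, zero_mul, Finset.sum_const_zero, add_zero]
        rw [max_eq_right (not_lt.1 hxl)]
    · intro S hS hne
      have hlnS : l ∉ S := by
        intro hlmem
        apply hne
        obtain ⟨i, rfl⟩ := (hclasses S).1 hS
        ext z
        simp only [Set.mem_setOf_eq]
        constructor
        · intro hz; exact htrans i l z hlmem hz
        · intro hz
          have h1 : tied l i := htrans i l i hlmem (hrefl i)
          have h2 : tied i z := by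
            -- tied l i and tied l z give tied i z
            exact htrans l i z h1 hz
          exact h2
      by_cases h : pos S <;> simp [h, Set.indicator_of_notMem hlnS]
  · intro S hS
    constructor
    · intro h
      have hnp : ¬ pos S := by
        rintro ⟨l, hl, hxl⟩
        have := h l hl
        rw [max_eq_left hxl.le] at this
        linarith
      simp [hnp]
    · rintro ⟨hα', hβ⟩ l hl
      have hnp : ¬ pos S := by
        intro h
        simp only [if_pos h] at hβ
        linarith
      have : ¬ 0 < x l := fun hh => hnp ⟨l, hl, hh⟩
      rw [max_eq_right (not_lt.1 this)]
end

section
/- Let x = ∑ᵢ αᵢ vᵢ + c with |αᵢ| ≤ 1 be in the affine region A. Then there exist scalars α'^j_i with |α'^j_i| ≤ 1 for all i and all tie classes j, such that ReLU(x) = ∑_{i,j} α'^j_i v'^j_i + ReLU(c), where v'^j_i is vᵢ with all components outside tie class j set to zero. In other words, the affine region with basis vectors {v'^j_i} and center ReLU(c) over-approximates the ReLU image of A. -/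
noncomputable def rr8 (a b : ℝ) : ℝ :=
  if a = b then (if 0 < a then 1 else 0) else (max a 0 - max b 0) / (a - b)

lemma rr8_mul (a b : ℝ) : rr8 a b * (a - b) = max a 0 - max b 0 := by
  unfold rr8
  by_cases h : a = b
  · simp [h]
  · rw [if_neg h, div_mul_cancel₀]
    exact sub_ne_zero_of_ne h

lemma rr8_abs (a b : ℝ) : |rr8 a b| ≤ 1 := by
  unfold rr8
  by_cases h : a = b
  · rw [if_pos h]; split <;> simp
  · rw [if_neg h, abs_div, div_le_one (abs_pos.mpr (sub_ne_zero_of_ne h))]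
    exact abs_max_sub_max_le_abs a b 0

lemma rr8_one {a b : ℝ} (ha : 0 ≤ a) (hb : 0 ≤ b) (h : 0 < a ∨ 0 < b) : rr8 a b = 1 := by
  unfold rr8
  by_cases hab : a = b
  · rw [if_pos hab, if_pos]; rcases h with h | h; exact h; exact hab ▸ h
  · rw [if_neg hab, max_eq_left ha, max_eq_left hb, div_self (sub_ne_zero_of_ne hab)]

lemma rr8_zero {a b : ℝ} (ha : a ≤ 0) (hb : b ≤ 0) : rr8 a b = 0 := by
  unfold rr8
  by_cases hab : a = b
  · rw [if_pos hab, if_neg (not_lt.mpr ha)]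
  · rw [if_neg hab, max_eq_right ha, max_eq_right hb, sub_zero, zero_div]

theorem stmt_8 (n k : ℕ) (v : Fin k → Fin n → ℝ) (c : Fin n → ℝ)
    (A : Set (Fin n → ℝ))
    (hA : A = {x | ∃ α : Fin k → ℝ, (∀ i, |α i| ≤ 1) ∧ x = (∑ i, α i • v i) + c})
    (tied : Fin n → Fin n → Prop)
    (htied : ∀ i₁ i₂, tied i₁ i₂ ↔ ∀ x ∈ A,
      (x i₁ > 0 ∧ x i₂ > 0) ∨ (x i₁ < 0 ∧ x i₂ < 0) ∨ (x i₁ = 0 ∧ x i₂ = 0))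
    (classes : Finset (Set (Fin n)))
    (hclasses : ∀ S : Set (Fin n), S ∈ classes ↔ ∃ i : Fin n, S = {i' | tied i i'})
    (α : Fin k → ℝ) (hα : ∀ i, |α i| ≤ 1)
    (x : Fin n → ℝ) (hx : x = (∑ i, α i • v i) + c) :
    ∃ α' : Fin k → Set (Fin n) → ℝ,
      (∀ i S, |α' i S| ≤ 1) ∧
      (fun l => max (x l) 0) =
        (∑ S ∈ classes, ∑ i, α' i S • S.indicator (v i)) + (fun l => max (c l) 0) := by
  -- coordinates of x
  have hxl : ∀ l, x l = (∑ i, α i * v i l) + c l := by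
    intro l
    rw [hx]
    simp [Finset.sum_apply]
  -- points on the segment from c to x lie in A
  have hseg : ∀ t : ℝ, 0 ≤ t → t ≤ 1 →
      (fun l => t * (x l - c l) + c l) ∈ A := by
    intro t ht0 ht1
    rw [hA]
    refine ⟨fun i => t * α i, fun i => ?_, ?_⟩
    · rw [abs_mul]
      have := hα i
      have : |t| ≤ 1 := by rw [abs_of_nonneg ht0]; exact ht1
      nlinarith [abs_nonneg (α i), abs_nonneg t, hα i]
    · funext l
      simp only [Finset.sum_apply, Pi.add_apply, Pi.smul_apply, smul_eq_mul]
      rw [hxl l]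
      ring_nf
      rw [Finset.mul_sum]
      ring_nf
  -- key pointwise identity
  have key : ∀ j l : Fin n, tied j l →
      rr8 (x j) (c j) * (x l - c l) = max (x l) 0 - max (c l) 0 := by
    intro j l htjl
    rw [htied] at htjl
    have hsign : ∀ t : ℝ, 0 ≤ t → t ≤ 1 →
        (t * (x j - c j) + c j > 0 ∧ t * (x l - c l) + c l > 0) ∨
        (t * (x j - c j) + c j < 0 ∧ t * (x l - c l) + c l < 0) ∨
        (t * (x j - c j) + c j = 0 ∧ t * (x l - c l) + c l = 0) := by
      intro t ht0 ht1
      exact htjl _ (hseg t ht0 ht1)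
    have h1 := hsign 1 zero_le_one le_rfl
    have h0 := hsign 0 le_rfl zero_le_one
    simp only [one_mul, sub_add_cancel] at h1
    simp only [zero_mul, zero_add] at h0
    -- reduce to rr8 equality or degenerate case
    have main : rr8 (x j) (c j) = rr8 (x l) (c l) ∨ x l = c l := by
      rcases h1 with ⟨hxj, hxl'⟩ | ⟨hxj, hxl'⟩ | ⟨hxj, hxl'⟩ <;>
        rcases h0 with ⟨hcj, hcl⟩ | ⟨hcj, hcl⟩ | ⟨hcj, hcl⟩
      · exact Or.inl (by rw [rr8_one hxj.le hcj.le (Or.inl hxj), rr8_one hxl'.le hcl.le (Or.inl hxl')])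
      · -- x > 0, c < 0 : crossing
        left
        have hdl : (0:ℝ) < x l - c l := by linarith
        have hdj : (0:ℝ) < x j - c j := by linarith
        set t : ℝ := (-(c l)) / (x l - c l) with hT
        have ht0 : 0 ≤ t := div_nonneg (by linarith) hdl.le
        have ht1 : t ≤ 1 := by
          rw [div_le_one hdl]; linarith
        have hcross : t * (x l - c l) + c l = 0 := by
          rw [hT, div_mul_cancel₀ _ (ne_of_gt hdl)]; ring
        rcases hsign t ht0 ht1 with ⟨_, h⟩ | ⟨_, h⟩ | ⟨hj, _⟩
        · rw [hcross] at h; exact absurd h (lt_irrefl 0)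
        · rw [hcross] at h; exact absurd h (lt_irrefl 0)
        · -- t*(x j - c j) + c j = 0 gives c j * (x l - c l) = c l * (x j - c j)
          have hrel : c j * (x l - c l) = c l * (x j - c j) := by
            linear_combination (x l - c l) * hj - (x j - c j) * hcross
          unfold rr8
          rw [if_neg (by intro h; rw [h] at hxj; linarith),
              if_neg (by intro h; rw [h] at hxl'; linarith)]
          rw [max_eq_left hxj.le, max_eq_left hxl'.le,
              max_eq_right hcj.le, max_eq_right hcl.le]
          rw [div_eq_div_iff (ne_of_gt hdj) (ne_of_gt hdl)]
          ring_nf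
          nlinarith [hrel]
      · exact Or.inl (by rw [rr8_one hxj.le hcj.ge (Or.inl hxj), rr8_one hxl'.le hcl.ge (Or.inl hxl')])
      · -- x < 0, c > 0 : crossing
        left
        have hdl : x l - c l < 0 := by linarith
        have hdj : x j - c j < 0 := by linarith
        set t : ℝ := (-(c l)) / (x l - c l) with hT
        have ht0 : 0 ≤ t := by
          rw [hT, div_nonneg_iff]
          exact Or.inr ⟨by linarith, hdl.le⟩
        have ht1 : t ≤ 1 := by
          rw [hT, div_le_one_iff]
          exact Or.inr (Or.inr ⟨hdl, by linarith⟩)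
        have hcross : t * (x l - c l) + c l = 0 := by
          rw [hT, div_mul_cancel₀ _ (ne_of_lt hdl)]; ring
        rcases hsign t ht0 ht1 with ⟨_, h⟩ | ⟨_, h⟩ | ⟨hj, _⟩
        · rw [hcross] at h; exact absurd h (lt_irrefl 0)
        · rw [hcross] at h; exact absurd h (lt_irrefl 0)
        · have hrel : c j * (x l - c l) = c l * (x j - c j) := by
            linear_combination (x l - c l) * hj - (x j - c j) * hcross
          unfold rr8
          rw [if_neg (by intro h; rw [h] at hxj; linarith),
              if_neg (by intro h; rw [h] at hxl'; linarith)]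
          rw [max_eq_right hxj.le, max_eq_right hxl'.le,
              max_eq_left hcj.le, max_eq_left hcl.le]
          rw [div_eq_div_iff (ne_of_lt hdj) (ne_of_lt hdl)]
          nlinarith [hrel]
      · exact Or.inl (by rw [rr8_zero hxj.le hcj.le, rr8_zero hxl'.le hcl.le])
      · exact Or.inl (by rw [rr8_zero hxj.le hcj.le, rr8_zero hxl'.le hcl.le])
      · exact Or.inl (by rw [rr8_one hxj.ge hcj.le (Or.inr hcj), rr8_one hxl'.ge hcl.le (Or.inr hcl)])
      · exact Or.inl (by rw [rr8_zero hxj.le hcj.le, rr8_zero hxl'.le hcl.le])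
      · right; rw [hxl', hcl]
    rcases main with h | h
    · rw [h, rr8_mul]
    · rw [h]; simp
  -- tied is reflexive, symmetric, transitive
  have hrefl : ∀ a : Fin n, tied a a := by
    intro a
    rw [htied]
    intro y _
    rcases lt_trichotomy (y a) 0 with h | h | h
    · exact Or.inr (Or.inl ⟨h, h⟩)
    · exact Or.inr (Or.inr ⟨h, h⟩)
    · exact Or.inl ⟨h, h⟩
  have hsymm : ∀ a b : Fin n, tied a b → tied b a := by
    intro a b h
    rw [htied] at h ⊢
    intro y hy
    rcases h y hy with ⟨h1, h2⟩ | ⟨h1, h2⟩ | ⟨h1, h2⟩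
    · exact Or.inl ⟨h2, h1⟩
    · exact Or.inr (Or.inl ⟨h2, h1⟩)
    · exact Or.inr (Or.inr ⟨h2, h1⟩)
  have htrans : ∀ a b d : Fin n, tied a b → tied b d → tied a d := by
    intro a b d hab hbd
    rw [htied] at hab hbd ⊢
    intro y hy
    rcases hab y hy with ⟨h1, h2⟩ | ⟨h1, h2⟩ | ⟨h1, h2⟩ <;>
      rcases hbd y hy with ⟨h3, h4⟩ | ⟨h3, h4⟩ | ⟨h3, h4⟩ <;>
      first
        | exact Or.inl ⟨h1, h4⟩
        | exact Or.inr (Or.inl ⟨h1, h4⟩)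
        | exact Or.inr (Or.inr ⟨h1, h4⟩)
        | (exfalso; linarith)
  -- definition of α'
  classical
  set ρ : Set (Fin n) → ℝ := fun S =>
    if h : ∃ jj : Fin n, S = {i' | tied jj i'} then rr8 (x h.choose) (c h.choose) else 0
    with hρ
  have hρabs : ∀ S, |ρ S| ≤ 1 := by
    intro S
    rw [hρ]
    dsimp only
    split
    · exact rr8_abs _ _
    · simp
  refine ⟨fun i S => ρ S * α i, ?_, ?_⟩
  · intro i S
    rw [abs_mul]
    have h1 := hρabs S
    have h2 := hα i
    nlinarith [abs_nonneg (ρ S), abs_nonneg (α i)]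
  · funext l
    have hSl : ({i' | tied l i'} : Set (Fin n)) ∈ classes := (hclasses _).mpr ⟨l, rfl⟩
    have hlSl : l ∈ ({i' | tied l i'} : Set (Fin n)) := hrefl l
    simp only [Finset.sum_apply, Pi.add_apply, Pi.smul_apply, smul_eq_mul]
    rw [Finset.sum_eq_single_of_mem ({i' | tied l i'} : Set (Fin n)) hSl]
    · -- main term
      have hex : ∃ jj : Fin n, ({i' | tied l i'} : Set (Fin n)) = {i' | tied jj i'} := ⟨l, rfl⟩
      have hρval : ρ ({i' | tied l i'} : Set (Fin n)) = rr8 (x hex.choose) (c hex.choose) := by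
        rw [hρ]; dsimp only; rw [dif_pos hex]
      have htj : tied hex.choose l := by
        have hspec := hex.choose_spec
        have : l ∈ ({i' | tied hex.choose i'} : Set (Fin n)) := hspec ▸ hlSl
        exact this
      have hkey := key hex.choose l htj
      have hsum : ∑ i, ρ ({i' | tied l i'} : Set (Fin n)) * α i *
          Set.indicator ({i' | tied l i'} : Set (Fin n)) (v i) l
          = ρ ({i' | tied l i'} : Set (Fin n)) * (x l - c l) := by
        have hind : ∀ i : Fin k, ({i' | tied l i'} : Set (Fin n)).indicator (v i) l = v i l :=
          fun i => Set.indicator_of_mem hlSl (v i)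
        simp only [hind]
        have hdiff : x l - c l = ∑ i, α i * v i l := by rw [hxl l]; ring
        rw [hdiff, Finset.mul_sum]
        exact Finset.sum_congr rfl fun i _ => by ring
      rw [hsum, hρval, hkey]
      ring
    · -- other classes contribute 0
      intro S hS hne
      have hlnot : l ∉ S := by
        intro hl
        apply hne
        obtain ⟨j, rfl⟩ := (hclasses S).mp hS
        have htjl : tied j l := hl
        ext i'
        simp only [Set.mem_setOf_eq]
        constructor
        · intro h; exact htrans l j i' (hsymm j l htjl) h
        · intro h; exact htrans j l i' htjl h
      apply Finset.sum_eq_zero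
      intro i _
      rw [Set.indicator_of_notMem hlnot]
      ring
end
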